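/- Let F : ℝ → ℝ be a cumulative distribution function with continuous density f (so F' = f), and let b : [a,c] → ℝ be differentiable. Suppose that for every v in [a,c], the function t ↦ F(b(t)+t)·(v − (b(t)+t)) + t attains a maximum over [a,c] at t = v, with v in the interior. Then for every interior v, [f(b(v)+v)·b(v) + F(b(v)+v)]·(b'(v) + 1) = 1. -/

import Mathlib

/-- First-order condition for the separating equilibrium: if for every `v ∈ [a,c]`
the function `t ↦ F(b(t)+t)(v − (b(t)+t)) + t` attains a maximum on `[a,c]` at
`t = v`, with `v` interior, then
`(f(b(v)+v)b(v) + F(b(v)+v))(b'(v)+1) = 1` at every interior `v`. -/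
theorem stmt_7 (F f : ℝ → ℝ) (hf : Continuous f)
    (hF : ∀ x, HasDerivAt F (f x) x)
    (a c : ℝ) (hac : a < c) (b b' : ℝ → ℝ)
    (hb : ∀ v ∈ Set.Icc a c, HasDerivAt b (b' v) v)
    (hmax : ∀ v ∈ Set.Ioo a c,
      IsMaxOn (fun t => F (b t + t) * (v - (b t + t)) + t) (Set.Icc a c) v) :
    ∀ v ∈ Set.Ioo a c,
      (f (b v + v) * b v + F (b v + v)) * (b' v + 1) = 1 := by
  intro v hv
  have hvI : v ∈ Set.Icc a c := Set.Ioo_subset_Icc_self hv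
  have hbv : HasDerivAt b (b' v) v := hb v hvI
  have hg : HasDerivAt (fun t => b t + t) (b' v + 1) v := hbv.add (hasDerivAt_id v)
  have hFg : HasDerivAt (fun t => F (b t + t)) (f (b v + v) * (b' v + 1)) v :=
    HasDerivAt.comp (h := fun t => b t + t) v (hF (b v + v)) hg
  have hsub : HasDerivAt (fun t => v - (b t + t)) (-(b' v + 1)) v := by
    exact hg.const_sub v
  have hprod : HasDerivAt (fun t => F (b t + t) * (v - (b t + t)) + t)
      (f (b v + v) * (b' v + 1) * (v - (b v + v)) + F (b v + v) * (-(b' v + 1)) + 1) v := by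
    exact (hFg.mul hsub).add (hasDerivAt_id v)
  have hloc : IsLocalMax (fun t => F (b t + t) * (v - (b t + t)) + t) v :=
    (hmax v hv).isLocalMax (Icc_mem_nhds hv.1 hv.2)
  have h0 := hloc.hasDerivAt_eq_zero hprod
  have hsimp : v - (b v + v) = -b v := by ring
  rw [hsimp] at h0
  nlinarith [h0]
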